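/- arXiv:2102.07558 — 4 statements merged into one kernel-verified Lean document; each statement's English description precedes it below -/
import Mathlib

section
/- Assume there exists a bounded function η ∈ C¹([0,∞)) with η' = -b/a on [0,∞) (bounded-drift condition), and that λ₁ > 0. Then (L, B) satisfies the Maximum Principle on (0,∞): every v ∈ C²([0,∞)) with L v ≤ 0 on (0,∞), -a(0)v'(0) + γ v(0) ≤ 0, and sup v < +∞ satisfies v ≤ 0 on [0,∞). -/
open Topology

/-- The one-dimensional elliptic operator `L u = -(a u')' - b u' - c u`. -/
noncomputable def L1 (a b c : ℝ → ℝ) (u : ℝ → ℝ) (x : ℝ) : ℝ :=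
  -(deriv (fun y => a y * deriv u y) x) - b x * deriv u x - c x * u x

/-- `f` is locally `α`-Hölder continuous on the set `s ⊆ ℝ`. -/
def LocHolderOn (α : ℝ) (f : ℝ → ℝ) (s : Set ℝ) : Prop :=
  ∀ x ∈ s, ∃ U ∈ 𝓝[s] x, ∃ C : NNReal, HolderOnWith C α.toNNReal f U

/-- The generalized principal eigenvalue of `(L, B)` on `(0,∞)` with Robin boundary
operator `B u = -a(0)u'(0) + γ u(0)`:
`λ₁ = sup{λ : ∃ φ ∈ C²([0,∞)), φ > 0 on [0,∞), Lφ ≥ λφ on (0,∞), Bφ ≥ 0}`. -/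
noncomputable def lambda1Robin (a b c : ℝ → ℝ) (γ : ℝ) : ℝ :=
  sSup {l : ℝ | ∃ φ : ℝ → ℝ, ContDiffOn ℝ 2 φ (Set.Ici 0) ∧
    (∀ x : ℝ, 0 ≤ x → 0 < φ x) ∧
    (∀ x : ℝ, 0 < x → l * φ x ≤ L1 a b c φ x) ∧
    0 ≤ -(a 0 * derivWithin φ (Set.Ici 0) 0) + γ * φ 0}

section Aux

open Set

/-- endpoint monotonicity from nonnegative derivative -/
lemma mono_trick {f f' : ℝ → ℝ} {s e : ℝ} (hse : s ≤ e)
    (hc : ContinuousOn f (Icc s e))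
    (hd : ∀ y ∈ Ioo s e, HasDerivAt f (f' y) y)
    (h0 : ∀ y ∈ Ioo s e, 0 ≤ f' y) : f s ≤ f e := by
  have hm : MonotoneOn f (Icc s e) := by
    apply monotoneOn_of_deriv_nonneg (convex_Icc s e) hc
    · intro y hy
      rw [interior_Icc] at hy
      exact (hd y hy).differentiableAt.differentiableWithinAt
    · intro y hy
      rw [interior_Icc] at hy
      rw [(hd y hy).deriv]
      exact h0 y hy
  exact hm (left_mem_Icc.2 hse) (right_mem_Icc.2 hse) hse

/-- strict endpoint decrease from negative derivative -/
lemma anti_trick {f f' : ℝ → ℝ} {s e : ℝ} (hse : s < e)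
    (hc : ContinuousOn f (Icc s e))
    (hd : ∀ y ∈ Ioo s e, HasDerivAt f (f' y) y)
    (h0 : ∀ y ∈ Ioo s e, f' y < 0) : f e < f s := by
  have hm : StrictAntiOn f (Icc s e) := by
    apply strictAntiOn_of_deriv_neg (convex_Icc s e) hc
    intro y hy
    rw [interior_Icc] at hy
    rw [(hd y hy).deriv]
    exact h0 y hy
  exact hm (left_mem_Icc.2 hse.le) (right_mem_Icc.2 hse.le) hse

lemma derivP {a b c η u : ℝ → ℝ}
    (haC1 : ContDiffOn ℝ 1 a (Set.Ici 0))
    (hηC1 : ContDiffOn ℝ 1 η (Set.Ici 0))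
    (hηd : ∀ x : ℝ, 0 ≤ x → derivWithin η (Set.Ici 0) x = -(b x / a x))
    (hapos : ∀ x : ℝ, 0 ≤ x → 0 < a x)
    (hu : ContDiffOn ℝ 2 u (Set.Ici 0)) {x : ℝ} (hx : 0 < x) :
    HasDerivAt (fun y => Real.exp (-η y) * (a y * deriv u y))
      (Real.exp (-η x) * (-(L1 a b c u x) - c x * u x)) x := by
  have hIci : Set.Ici (0:ℝ) ∈ 𝓝 x := Ici_mem_nhds hx
  have haD : DifferentiableAt ℝ a x := (haC1.contDiffAt hIci).differentiableAt (by norm_num)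
  obtain ⟨s, hs, hus⟩ := (hu.contDiffAt hIci).contDiffOn (le_refl 2) (by simp)
  have hxint : x ∈ interior s := mem_interior_iff_mem_nhds.2 hs
  have husI : ContDiffOn ℝ 2 u (interior s) := hus.mono interior_subset
  have hduC : ContDiffOn ℝ 1 (deriv u) (interior s) :=
    husI.deriv_of_isOpen isOpen_interior (m := 1) (by norm_num)
  have hduD : DifferentiableAt ℝ (deriv u) x :=
    ((hduC.differentiableOn (by norm_num)) x hxint).differentiableAt
      (isOpen_interior.mem_nhds hxint)
  have hprodD : DifferentiableAt ℝ (fun y => a y * deriv u y) x := haD.mul hduD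
  have hP : HasDerivAt (fun y => a y * deriv u y)
      (deriv (fun y => a y * deriv u y) x) x := hprodD.hasDerivAt
  have hηD : DifferentiableAt ℝ η x := (hηC1.contDiffAt hIci).differentiableAt (by norm_num)
  have hηd' : deriv η x = -(b x / a x) := by
    rw [← derivWithin_of_mem_nhds hIci]; exact hηd x hx.le
  have hη : HasDerivAt η (-(b x / a x)) x := hηd' ▸ hηD.hasDerivAt
  have hexp : HasDerivAt (fun y => Real.exp (-η y))
      (Real.exp (-η x) * (b x / a x)) x := by
    have h1 : HasDerivAt (fun y => -η y) (b x / a x) x := by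
      have h0 := hη.neg; rw [neg_neg] at h0; exact h0
    simpa using h1.exp
  have := hexp.mul hP
  convert this using 1
  rfl; rfl; rfl
  have hax : a x ≠ 0 := (hapos x hx.le).ne'
  simp only [L1]
  field_simp
  ring

lemma derivG {a b c η φ v : ℝ → ℝ}
    (haC1 : ContDiffOn ℝ 1 a (Set.Ici 0))
    (hηC1 : ContDiffOn ℝ 1 η (Set.Ici 0))
    (hηd : ∀ x : ℝ, 0 ≤ x → derivWithin η (Set.Ici 0) x = -(b x / a x))
    (hapos : ∀ x : ℝ, 0 ≤ x → 0 < a x)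
    (hφ : ContDiffOn ℝ 2 φ (Set.Ici 0))
    (hv : ContDiffOn ℝ 2 v (Set.Ici 0)) {x : ℝ} (hx : 0 < x) :
    HasDerivAt (fun y => Real.exp (-η y) * a y *
        (φ y * derivWithin v (Set.Ici 0) y - derivWithin φ (Set.Ici 0) y * v y))
      (Real.exp (-η x) * (v x * L1 a b c φ x - φ x * L1 a b c v x)) x := by
  have hIci : Set.Ici (0:ℝ) ∈ 𝓝 x := Ici_mem_nhds hx
  have hφD : DifferentiableAt ℝ φ x := (hφ.contDiffAt hIci).differentiableAt (by norm_num)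
  have hvD : DifferentiableAt ℝ v x := (hv.contDiffAt hIci).differentiableAt (by norm_num)
  have hPv := derivP (c := c) haC1 hηC1 hηd hapos hv hx
  have hPφ := derivP (c := c) haC1 hηC1 hηd hapos hφ hx
  have hF : HasDerivAt (fun y => φ y * (Real.exp (-η y) * (a y * deriv v y))
      - v y * (Real.exp (-η y) * (a y * deriv φ y)))
      (deriv φ x * (Real.exp (-η x) * (a x * deriv v x))
        + φ x * (Real.exp (-η x) * (-(L1 a b c v x) - c x * v x))
        - (deriv v x * (Real.exp (-η x) * (a x * deriv φ x))
        + v x * (Real.exp (-η x) * (-(L1 a b c φ x) - c x * φ x)))) x :=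
    (hφD.hasDerivAt.mul hPv).sub (hvD.hasDerivAt.mul hPφ)
  have heq : (fun y => Real.exp (-η y) * a y *
      (φ y * derivWithin v (Set.Ici 0) y - derivWithin φ (Set.Ici 0) y * v y))
      =ᶠ[𝓝 x] (fun y => φ y * (Real.exp (-η y) * (a y * deriv v y))
      - v y * (Real.exp (-η y) * (a y * deriv φ y))) := by
    filter_upwards [Ioi_mem_nhds hx] with y hy
    have h1 : derivWithin v (Set.Ici 0) y = deriv v y :=
      derivWithin_of_mem_nhds (Ici_mem_nhds hy)
    have h2 : derivWithin φ (Set.Ici 0) y = deriv φ y :=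
      derivWithin_of_mem_nhds (Ici_mem_nhds hy)
    rw [h1, h2]; ring
  have := hF.congr_of_eventuallyEq heq
  convert this using 1
  · rfl
  · rfl
  · ring

end Aux

set_option maxHeartbeats 4000000 in
/-- Assume `a, b, c` bounded and locally `α`-Hölder on `[0,∞)`, `a` `C¹` with locally
`α`-Hölder derivative and `a > 0`; assume the bounded-drift condition (`η' = -b/a` for a
bounded `C¹` function `η`) and `λ₁ > 0`. Then `(L, B)` satisfies the Maximum Principle
on `(0,∞)`. -/
theorem robin_maximum_principle_of_lambda1_pos
    {α : ℝ} (hα : α ∈ Set.Ioo (0 : ℝ) 1) (γ : ℝ)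
    (a b c : ℝ → ℝ)
    (habdd : ∃ M : ℝ, ∀ x : ℝ, 0 ≤ x → |a x| ≤ M)
    (hbbdd : ∃ M : ℝ, ∀ x : ℝ, 0 ≤ x → |b x| ≤ M)
    (hcbdd : ∃ M : ℝ, ∀ x : ℝ, 0 ≤ x → |c x| ≤ M)
    (haH : LocHolderOn α a (Set.Ici 0))
    (hbH : LocHolderOn α b (Set.Ici 0))
    (hcH : LocHolderOn α c (Set.Ici 0))
    (haC1 : ContDiffOn ℝ 1 a (Set.Ici 0))
    (haDH : LocHolderOn α (fun x => derivWithin a (Set.Ici 0) x) (Set.Ici 0))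
    (hapos : ∀ x : ℝ, 0 ≤ x → 0 < a x)
    (hdrift : ∃ η : ℝ → ℝ, ContDiffOn ℝ 1 η (Set.Ici 0) ∧
      (∃ M : ℝ, ∀ x : ℝ, 0 ≤ x → |η x| ≤ M) ∧
      ∀ x : ℝ, 0 ≤ x → derivWithin η (Set.Ici 0) x = -(b x / a x))
    (hpos : 0 < lambda1Robin a b c γ)
    (v : ℝ → ℝ) (hv : ContDiffOn ℝ 2 v (Set.Ici 0))
    (hsub : ∀ x : ℝ, 0 < x → L1 a b c v x ≤ 0)
    (hrobin : -(a 0 * derivWithin v (Set.Ici 0) 0) + γ * v 0 ≤ 0)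
    (hbdd : BddAbove (v '' Set.Ici 0)) :
    ∀ x : ℝ, 0 ≤ x → v x ≤ 0 := by
  classical
  open Set in
  -- extract a positive eigenvalue candidate
  obtain ⟨l, hlS, hl⟩ : ∃ l ∈ {l : ℝ | ∃ φ : ℝ → ℝ, ContDiffOn ℝ 2 φ (Set.Ici 0) ∧
      (∀ x : ℝ, 0 ≤ x → 0 < φ x) ∧
      (∀ x : ℝ, 0 < x → l * φ x ≤ L1 a b c φ x) ∧
      0 ≤ -(a 0 * derivWithin φ (Set.Ici 0) 0) + γ * φ 0}, (0:ℝ) < l := by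
    have hne : {l : ℝ | ∃ φ : ℝ → ℝ, ContDiffOn ℝ 2 φ (Set.Ici 0) ∧
        (∀ x : ℝ, 0 ≤ x → 0 < φ x) ∧
        (∀ x : ℝ, 0 < x → l * φ x ≤ L1 a b c φ x) ∧
        0 ≤ -(a 0 * derivWithin φ (Set.Ici 0) 0) + γ * φ 0}.Nonempty := by
      by_contra h
      rw [Set.not_nonempty_iff_eq_empty] at h
      rw [lambda1Robin, h, Real.sSup_empty] at hpos
      exact lt_irrefl 0 hpos
    obtain ⟨l, hlS, hl⟩ := exists_lt_of_lt_csSup hne hpos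
    exact ⟨l, hlS, hl⟩
  obtain ⟨φ, hφC2, hφpos, hφsup, hφrob⟩ := hlS
  obtain ⟨η, hηC1, ⟨Mη, hMη⟩, hηd⟩ := hdrift
  -- upper bound for v
  obtain ⟨K₀, hK₀⟩ := hbdd
  set K : ℝ := max K₀ 1 with hKdef
  have hKpos : (0:ℝ) < K := lt_of_lt_of_le one_pos (le_max_right _ _)
  have hK : ∀ x : ℝ, 0 ≤ x → v x ≤ K := by
    intro x hx
    exact le_trans (hK₀ ⟨x, hx, rfl⟩) (le_max_left _ _)
  -- upper bound for a
  obtain ⟨Ma₀, hMa₀⟩ := habdd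
  set Ma : ℝ := max Ma₀ 1 with hMadef
  have hMapos : (0:ℝ) < Ma := lt_of_lt_of_le one_pos (le_max_right _ _)
  have haub : ∀ x : ℝ, 0 ≤ x → a x ≤ Ma :=
    fun x hx => le_trans (le_trans (le_abs_self _) (hMa₀ x hx)) (le_max_left _ _)
  -- notation
  set dv : ℝ → ℝ := derivWithin v (Set.Ici 0) with hdvdef
  set dφ : ℝ → ℝ := derivWithin φ (Set.Ici 0) with hdφdef
  set G : ℝ → ℝ := fun y => Real.exp (-η y) * a y *
      (φ y * derivWithin v (Set.Ici 0) y - derivWithin φ (Set.Ici 0) y * v y) with hGdef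
  set w : ℝ → ℝ := fun y => v y / φ y with hwdef
  -- continuity facts
  have hφcont : ContinuousOn φ (Set.Ici 0) := hφC2.continuousOn
  have hvcont : ContinuousOn v (Set.Ici 0) := hv.continuousOn
  have hacont : ContinuousOn a (Set.Ici 0) := haC1.continuousOn
  have hηcont : ContinuousOn η (Set.Ici 0) := hηC1.continuousOn
  have hecont : ContinuousOn (fun y => Real.exp (-η y)) (Set.Ici 0) :=
    Real.continuous_exp.comp_continuousOn hηcont.neg
  have hdvcont : ContinuousOn dv (Set.Ici 0) :=
    hv.continuousOn_derivWithin (uniqueDiffOn_Ici 0) (by norm_num)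
  have hdφcont : ContinuousOn dφ (Set.Ici 0) :=
    hφC2.continuousOn_derivWithin (uniqueDiffOn_Ici 0) (by norm_num)
  have hGcont : ContinuousOn G (Set.Ici 0) :=
    (hecont.mul hacont).mul ((hφcont.mul hdvcont).sub (hdφcont.mul hvcont))
  have hwcont : ContinuousOn w (Set.Ici 0) :=
    hvcont.div hφcont (fun x hx => (hφpos x hx).ne')
  -- numeric facts
  have hepos : ∀ y : ℝ, 0 < Real.exp (-η y) := fun y => Real.exp_pos _
  have helb : ∀ y : ℝ, 0 ≤ y → Real.exp (-Mη) ≤ Real.exp (-η y) := by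
    intro y hy
    exact Real.exp_le_exp.2 (neg_le_neg ((abs_le.1 (hMη y hy)).2))
  have heub : ∀ y : ℝ, 0 ≤ y → Real.exp (-η y) ≤ Real.exp Mη := by
    intro y hy
    exact Real.exp_le_exp.2 (le_trans (neg_le_abs (η y)) (hMη y hy))
  have hApos : ∀ y : ℝ, 0 ≤ y → 0 < Real.exp (-η y) * a y :=
    fun y hy => mul_pos (hepos y) (hapos y hy)
  have hAub : ∀ y : ℝ, 0 ≤ y → Real.exp (-η y) * a y ≤ Real.exp Mη * Ma := by
    intro y hy
    exact mul_le_mul (heub y hy) (haub y hy) (hapos y hy).le (Real.exp_pos _).le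
  -- derivative of G
  have hGder : ∀ x : ℝ, 0 < x → HasDerivAt G
      (Real.exp (-η x) * (v x * L1 a b c φ x - φ x * L1 a b c v x)) x := by
    intro x hx
    exact derivG haC1 hηC1 hηd hapos hφC2 hv hx
  have hGge : ∀ x : ℝ, 0 < x → 0 ≤ v x →
      l * Real.exp (-η x) * φ x * v x ≤
        Real.exp (-η x) * (v x * L1 a b c φ x - φ x * L1 a b c v x) := by
    intro x hx hvx
    have h1 := hsub x hx
    have h2 := hφsup x hx
    have h3 := hφpos x hx.le
    have h4 := hepos x
    nlinarith [mul_le_mul_of_nonneg_left h2 hvx, mul_nonneg (mul_nonneg h4.le h3.le) (neg_nonneg.2 h1)]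
  -- derivative of w
  have hwder : ∀ x : ℝ, 0 < x → HasDerivAt w
      (G x / (Real.exp (-η x) * a x * (φ x)^2)) x := by
    intro x hx
    have hIci : Set.Ici (0:ℝ) ∈ 𝓝 x := Ici_mem_nhds hx
    have hφD : DifferentiableAt ℝ φ x := (hφC2.contDiffAt hIci).differentiableAt (by norm_num)
    have hvD : DifferentiableAt ℝ v x := (hv.contDiffAt hIci).differentiableAt (by norm_num)
    have hd : HasDerivAt w ((deriv v x * φ x - v x * deriv φ x) / (φ x)^2) x :=
      hvD.hasDerivAt.div hφD.hasDerivAt (hφpos x hx.le).ne'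
    have h1 : derivWithin v (Set.Ici 0) x = deriv v x := derivWithin_of_mem_nhds hIci
    have h2 : derivWithin φ (Set.Ici 0) x = deriv φ x := derivWithin_of_mem_nhds hIci
    have heq : G x / (Real.exp (-η x) * a x * (φ x)^2)
        = (deriv v x * φ x - v x * deriv φ x) / (φ x)^2 := by
      rw [hGdef]
      simp only []
      rw [h1, h2]
      have hA : Real.exp (-η x) * a x ≠ 0 := (hApos x hx.le).ne'
      have hφx : φ x ≠ 0 := (hφpos x hx.le).ne'
      have hax : a x ≠ 0 := (hapos x hx.le).ne'
      field_simp
    rw [heq]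
    exact hd
  have hwv : ∀ x : ℝ, 0 ≤ x → v x = w x * φ x := by
    intro x hx
    rw [hwdef]
    simp only []
    rw [div_mul_cancel₀ _ (hφpos x hx).ne']
  -- Case 1 master lemma
  have hcase1 : ∀ ξ : ℝ, 0 ≤ ξ → 0 < v ξ → 0 ≤ G ξ → False := by
    intro ξ hξ hvξ hGξ
    have hφξ := hφpos ξ hξ
    have hw₀ : 0 < w ξ := div_pos hvξ hφξ
    have hsub0 : ∀ {z : ℝ}, Set.Icc ξ z ⊆ Set.Ici (0:ℝ) :=
      fun {z} y hy => le_trans hξ hy.1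
    -- key monotonicity
    have key1 : ∀ x : ℝ, ξ ≤ x → (∀ y : ℝ, ξ ≤ y → y < x → 0 < v y) →
        (∀ z ∈ Set.Icc ξ x, 0 ≤ G z ∧ w ξ ≤ w z) := by
      intro x hxξ hvp
      have hGmon : ∀ z ∈ Set.Icc ξ x, G ξ ≤ G z := by
        intro z hz
        apply mono_trick hz.1 (hGcont.mono hsub0)
        · intro y hy
          exact hGder y (lt_of_le_of_lt hξ hy.1)
        · intro y hy
          have hy0 : 0 < y := lt_of_le_of_lt hξ hy.1
          have hvy : 0 < v y := hvp y hy.1.le (lt_of_lt_of_le hy.2 hz.2)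
          refine le_trans ?_ (hGge y hy0 hvy.le)
          exact le_of_lt (mul_pos (mul_pos (mul_pos hl (hepos y)) (hφpos y hy0.le)) hvy)
      intro z hz
      have hGz : 0 ≤ G z := le_trans hGξ (hGmon z hz)
      refine ⟨hGz, ?_⟩
      apply mono_trick hz.1 (hwcont.mono hsub0)
      · intro y hy; exact hwder y (lt_of_le_of_lt hξ hy.1)
      · intro y hy
        have hy0 : 0 < y := lt_of_le_of_lt hξ hy.1
        have hGy : 0 ≤ G y := le_trans hGξ (hGmon y ⟨hy.1.le, le_trans hy.2.le hz.2⟩)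
        exact div_nonneg hGy (mul_nonneg (hApos y hy0.le).le (sq_nonneg _))
    -- v is positive on [ξ, ∞)
    have hvpos : ∀ x : ℝ, ξ ≤ x → 0 < v x := by
      by_contra hcon
      push_neg at hcon
      obtain ⟨x₀, hx₀ξ, hx₀⟩ := hcon
      set B : Set ℝ := {y | ξ ≤ y ∧ v y ≤ 0} with hBdef
      have hBne : B.Nonempty := ⟨x₀, hx₀ξ, hx₀⟩
      have hBbdd : BddBelow B := ⟨ξ, fun y hy => hy.1⟩
      have hBclosed : IsClosed B := by
        have hBeq : B = Set.Ici ξ ∩ (Set.Ici 0 ∩ v ⁻¹' Set.Iic 0) := by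
          ext y
          constructor
          · rintro ⟨h1, h2⟩; exact ⟨h1, le_trans hξ h1, h2⟩
          · rintro ⟨h1, _, h3⟩; exact ⟨h1, h3⟩
        rw [hBeq]
        exact isClosed_Ici.inter (hvcont.preimage_isClosed_of_isClosed isClosed_Ici isClosed_Iic)
      have htB : sInf B ∈ B := hBclosed.csInf_mem hBne hBbdd
      have hev : v ⁻¹' Set.Ioi 0 ∈ 𝓝[Set.Ici 0] ξ := hvcont ξ hξ (Ioi_mem_nhds hvξ)
      rw [Metric.mem_nhdsWithin_iff] at hev
      obtain ⟨δ, hδpos, hδ⟩ := hev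
      have htlb : ξ + δ/2 ≤ sInf B := by
        apply le_csInf hBne
        intro y hy
        by_contra hy2
        push_neg at hy2
        have hy0 : (0:ℝ) ≤ y := le_trans hξ hy.1
        have hmem : y ∈ Metric.ball ξ δ ∩ Set.Ici 0 := by
          refine ⟨?_, hy0⟩
          rw [Metric.mem_ball, Real.dist_eq, abs_of_nonneg (sub_nonneg.2 hy.1)]
          linarith
        have := hδ hmem
        simp only [Set.mem_preimage, Set.mem_Ioi] at this
        linarith [hy.2]
      have htξ : ξ ≤ sInf B := le_trans (by linarith) htlb
      have hvt : ∀ y : ℝ, ξ ≤ y → y < sInf B → 0 < v y := by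
        intro y hy1 hy2
        by_contra h
        push_neg at h
        exact absurd (csInf_le hBbdd ⟨hy1, h⟩) (not_le.2 hy2)
      have hwt := (key1 (sInf B) htξ hvt (sInf B) ⟨htξ, le_refl _⟩).2
      have hφt := hφpos (sInf B) (le_trans hξ htξ)
      have hvt0 : 0 < v (sInf B) := by
        rw [hwv (sInf B) (le_trans hξ htξ)]
        exact mul_pos (lt_of_lt_of_le hw₀ hwt) hφt
      linarith [htB.2]
    have hvlb : ∀ z : ℝ, ξ ≤ z → w ξ * φ z ≤ v z := by
      intro z hz
      have h1 := (key1 z hz (fun y hy _ => hvpos y hy) z ⟨hz, le_refl z⟩).2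
      rw [hwv z (le_trans hξ hz)]
      exact mul_le_mul_of_nonneg_right h1 (hφpos z (le_trans hξ hz)).le
    have hGlow : ∀ z : ℝ, ξ ≤ z → 0 ≤ G z :=
      fun z hz => (key1 z hz (fun y hy _ => hvpos y hy) z ⟨hz, le_refl z⟩).1
    -- primitive F
    have hφ2cont : ContinuousOn (fun t => (φ t)^2) (Set.Ici 0) := hφcont.pow 2
    set F : ℝ → ℝ := fun z => ∫ t in ξ..z, (φ t)^2 with hFdef
    have hφ2int : ∀ z : ℝ, ξ ≤ z →
        IntervalIntegrable (fun t => (φ t)^2) MeasureTheory.volume ξ z := by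
      intro z hz
      apply ContinuousOn.intervalIntegrable
      rw [Set.uIcc_of_le hz]
      exact hφ2cont.mono hsub0
    have hFcont : ∀ z : ℝ, ξ ≤ z → ContinuousOn F (Set.Icc ξ z) := by
      intro z hz
      have h := intervalIntegral.continuousOn_primitive_interval' (hφ2int z hz)
        Set.left_mem_uIcc
      rw [Set.uIcc_of_le hz] at h
      exact h
    have hFder : ∀ y : ℝ, ξ < y → HasDerivAt F ((φ y)^2) y := by
      intro y hy
      have hy0 : 0 < y := lt_of_le_of_lt hξ hy
      apply intervalIntegral.integral_hasDerivAt_right (hφ2int y hy.le)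
      · exact ContinuousOn.stronglyMeasurableAtFilter isOpen_Ioi
          (hφ2cont.mono Set.Ioi_subset_Ici_self) y hy0
      · exact hφ2cont.continuousAt (Ici_mem_nhds hy0)
    have hFnonneg : ∀ z : ℝ, ξ ≤ z → 0 ≤ F z := by
      intro z hz
      apply intervalIntegral.integral_nonneg hz
      intro t _; positivity
    have hFpos : ∀ z : ℝ, ξ < z → 0 < F z := by
      intro z hz
      apply intervalIntegral.intervalIntegral_pos_of_pos_on (hφ2int z hz.le) _ hz
      intro t ht
      exact pow_pos (hφpos t (le_trans hξ ht.1.le)) 2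
    have hFmono : ∀ z1 z2 : ℝ, ξ ≤ z1 → z1 ≤ z2 → F z1 ≤ F z2 := by
      intro z1 z2 h1 h2
      apply mono_trick (f' := fun t => (φ t)^2) h2
        ((hFcont z2 (le_trans h1 h2)).mono (Set.Icc_subset_Icc_left h1))
      · intro y hy; exact hFder y (lt_of_le_of_lt h1 hy.1)
      · intro y hy; positivity
    set c₁ : ℝ := l * Real.exp (-Mη) * (w ξ) with hc₁def
    have hc₁pos : 0 < c₁ := mul_pos (mul_pos hl (Real.exp_pos _)) hw₀
    -- S3 : c₁ F ≤ G
    have hS3 : ∀ z : ℝ, ξ ≤ z → c₁ * F z ≤ G z := by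
      intro z hz
      have := mono_trick (f := fun y => G y - c₁ * F y)
        (f' := fun y => Real.exp (-η y) * (v y * L1 a b c φ y - φ y * L1 a b c v y)
          - c₁ * (φ y)^2) hz
        ((hGcont.mono hsub0).sub (continuousOn_const.mul (hFcont z hz)))
        (fun y hy => (hGder y (lt_of_le_of_lt hξ hy.1)).sub
          ((hFder y hy.1).const_mul c₁))
        ?_
      · have hFξ : F ξ = 0 := intervalIntegral.integral_same
        simp only [hFξ, mul_zero, sub_zero] at this
        linarith [this, hGξ]
      · intro y hy
        have hy0 : 0 < y := lt_of_le_of_lt hξ hy.1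
        have hvy := hvpos y hy.1.le
        have h1 := hGge y hy0 hvy.le
        have h3 := hvlb y hy.1.le
        have h4 := helb y hy0.le
        have h5 := hφpos y hy0.le
        have h2 : c₁ * (φ y)^2 ≤ l * Real.exp (-η y) * φ y * v y := by
          calc c₁ * (φ y)^2 = l * (w ξ * φ y) * (Real.exp (-Mη) * φ y) := by
                rw [hc₁def]; ring
            _ ≤ l * v y * (Real.exp (-η y) * φ y) := by
                apply mul_le_mul
                · exact mul_le_mul_of_nonneg_left h3 hl.le
                · exact mul_le_mul_of_nonneg_right h4 h5.le
                · exact mul_nonneg (Real.exp_pos _).le h5.le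
                · exact mul_nonneg hl.le hvy.le
            _ = l * Real.exp (-η y) * φ y * v y := by ring
        linarith [h1, h2]
    set c₂ : ℝ := c₁ / (Real.exp Mη * Ma) with hc₂def
    have heMapos : (0:ℝ) < Real.exp Mη * Ma := mul_pos (Real.exp_pos _) hMapos
    have hc₂pos : 0 < c₂ := div_pos hc₁pos heMapos
    have hHicont : ∀ z : ℝ, ξ ≤ z → ContinuousOn (fun t => F t / (φ t)^2) (Set.Icc ξ z) := by
      intro z hz
      exact (hFcont z hz).div (hφ2cont.mono hsub0)
        (fun t ht => (pow_pos (hφpos t (hsub0 ht)) 2).ne')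
    have hHint : ∀ z : ℝ, ξ ≤ z →
        IntervalIntegrable (fun t => F t / (φ t)^2) MeasureTheory.volume ξ z := by
      intro z hz
      apply ContinuousOn.intervalIntegrable
      rw [Set.uIcc_of_le hz]
      exact hHicont z hz
    set H : ℝ → ℝ := fun z => ∫ t in ξ..z, F t / (φ t)^2 with hHdef
    have hHcont : ∀ z : ℝ, ξ ≤ z → ContinuousOn H (Set.Icc ξ z) := by
      intro z hz
      have h := intervalIntegral.continuousOn_primitive_interval' (hHint z hz)
        Set.left_mem_uIcc
      rw [Set.uIcc_of_le hz] at h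
      exact h
    have hHiconti : ContinuousOn (fun t => F t / (φ t)^2) (Set.Ioi ξ) := by
      intro t ht
      have ht0 : 0 < t := lt_of_le_of_lt hξ ht
      have h1 : ContinuousAt F t := (hFder t ht).continuousAt
      have h2 : ContinuousAt (fun s => (φ s)^2) t := hφ2cont.continuousAt (Ici_mem_nhds ht0)
      exact (h1.div h2 (pow_pos (hφpos t ht0.le) 2).ne').continuousWithinAt
    have hHder : ∀ y : ℝ, ξ < y → HasDerivAt H (F y / (φ y)^2) y := by
      intro y hy
      apply intervalIntegral.integral_hasDerivAt_right (hHint y hy.le)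
      · exact ContinuousOn.stronglyMeasurableAtFilter isOpen_Ioi hHiconti y hy
      · have h1 : ContinuousAt F y := (hFder y hy).continuousAt
        have h2 : ContinuousAt (fun s => (φ s)^2) y :=
          hφ2cont.continuousAt (Ici_mem_nhds (lt_of_le_of_lt hξ hy))
        exact h1.div h2 (pow_pos (hφpos y (le_trans hξ hy.le)) 2).ne'
    have hHpos : ∀ z : ℝ, ξ < z → 0 < H z := by
      intro z hz
      apply intervalIntegral.intervalIntegral_pos_of_pos_on (hHint z hz.le) _ hz
      intro t ht
      exact div_pos (hFpos t ht.1) (pow_pos (hφpos t (le_trans hξ ht.1.le)) 2)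
    have hHmono : ∀ z1 z2 : ℝ, ξ ≤ z1 → z1 ≤ z2 → H z1 ≤ H z2 := by
      intro z1 z2 h1 h2
      apply mono_trick (f' := fun t => F t / (φ t)^2) h2
        ((hHcont z2 (le_trans h1 h2)).mono (Set.Icc_subset_Icc_left h1))
      · intro y hy; exact hHder y (lt_of_le_of_lt h1 hy.1)
      · intro y hy
        exact div_nonneg (hFnonneg y (le_trans h1 hy.1.le)) (sq_nonneg _)
    -- S4 : w₀ + c₂ H ≤ w
    have hS4 : ∀ z : ℝ, ξ ≤ z → w ξ + c₂ * H z ≤ w z := by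
      intro z hz
      have := mono_trick (f := fun y => w y - c₂ * H y)
        (f' := fun y => G y / (Real.exp (-η y) * a y * (φ y)^2) - c₂ * (F y / (φ y)^2)) hz
        ((hwcont.mono hsub0).sub (continuousOn_const.mul (hHcont z hz)))
        (fun y hy => (hwder y (lt_of_le_of_lt hξ hy.1)).sub ((hHder y hy.1).const_mul c₂))
        ?_
      · have hHξ : H ξ = 0 := intervalIntegral.integral_same
        simp only [hHξ, mul_zero, sub_zero] at this
        linarith [this]
      · intro y hy
        have hy0 : 0 < y := lt_of_le_of_lt hξ hy.1
        have h5 := hφpos y hy0.le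
        have hAy := hApos y hy0.le
        have hGF := hS3 y hy.1.le
        have hDen : (0:ℝ) < Real.exp (-η y) * a y * (φ y)^2 := mul_pos hAy (pow_pos h5 2)
        rw [sub_nonneg]
        have step1 : c₂ * (F y / (φ y)^2) = c₁ * F y / (Real.exp Mη * Ma * (φ y)^2) := by
          rw [hc₂def]; field_simp
        rw [step1]
        have hnum : 0 ≤ c₁ * F y := mul_nonneg hc₁pos.le (hFnonneg y hy.1.le)
        have hden2 : Real.exp (-η y) * a y * (φ y)^2 ≤ Real.exp Mη * Ma * (φ y)^2 :=
          mul_le_mul_of_nonneg_right (hAub y hy0.le) (sq_nonneg _)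
        calc c₁ * F y / (Real.exp Mη * Ma * (φ y)^2)
            ≤ c₁ * F y / (Real.exp (-η y) * a y * (φ y)^2) := by gcongr
          _ ≤ G y / (Real.exp (-η y) * a y * (φ y)^2) := by gcongr
    -- Riccati blow-up
    have hF₁pos : 0 < F (ξ+1) := hFpos (ξ+1) (by linarith)
    have hH₁pos : 0 < H (ξ+1) := hHpos (ξ+1) (by linarith)
    set F₁ : ℝ := F (ξ+1) with hF₁def
    set H₁ : ℝ := H (ξ+1) with hH₁def
    set β : ℝ := F₁ * c₂^2 / K^2 with hβdef
    have hβpos : 0 < β := div_pos (mul_pos hF₁pos (pow_pos hc₂pos 2)) (pow_pos hKpos 2)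
    have hHlb : ∀ z : ℝ, ξ+1 ≤ z → H₁ ≤ H z := fun z hz => hHmono (ξ+1) z (by linarith) hz
    have hξ1 : ξ ≤ ξ + 1 := by linarith
    have hS6 : ∀ z : ℝ, ξ+1 ≤ z → -(H (ξ+1))⁻¹ - β * (ξ+1) ≤ -(H z)⁻¹ - β * z := by
      intro z hz
      apply mono_trick (f := fun y => -(H y)⁻¹ - β * y)
        (f' := fun y => (F y / (φ y)^2) / (H y)^2 - β) hz
      · apply ContinuousOn.sub
        · apply ContinuousOn.neg
          apply ContinuousOn.inv₀
            ((hHcont z (le_trans hξ1 hz)).mono (Set.Icc_subset_Icc_left hξ1))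
          intro t ht
          exact (lt_of_lt_of_le hH₁pos (hHlb t ht.1)).ne'
        · exact (continuous_const.mul continuous_id).continuousOn
      · intro y hy
        have hyξ : ξ < y := by have := hy.1; linarith
        have hHy : H y ≠ 0 := (lt_of_lt_of_le hH₁pos (hHlb y hy.1.le)).ne'
        have h1 := (hHder y hyξ).inv hHy
        have h2 : HasDerivAt (fun s : ℝ => β * s) β y := by
          simpa using (hasDerivAt_id y).const_mul β
        have h3 := h1.neg.sub h2
        convert h3 using 1
        · rfl
        · rfl
        · rfl
        · ring
      · intro y hy
        have hyξ : ξ < y := by have := hy.1; linarith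
        have hy0 : 0 < y := lt_of_le_of_lt hξ hyξ
        have hHy : 0 < H y := lt_of_lt_of_le hH₁pos (hHlb y hy.1.le)
        have hφy := hφpos y hy0.le
        have hKb : c₂ * H y * φ y ≤ K := by
          have h1 := hS4 y hyξ.le
          have h2 : c₂ * H y ≤ w y := by linarith [hw₀]
          have h3 : c₂ * H y * φ y ≤ w y * φ y := mul_le_mul_of_nonneg_right h2 hφy.le
          rw [← hwv y hy0.le] at h3
          exact le_trans h3 (hK y hy0.le)
        have hFy : F₁ ≤ F y := hFmono (ξ+1) y (by linarith) hy.1.le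
        rw [sub_nonneg]
        have hgoal : β * ((H y)^2 * (φ y)^2) ≤ F y := by
          have hq : c₂^2 * (H y)^2 * (φ y)^2 ≤ K^2 := by
            nlinarith [hKb, mul_pos (mul_pos hc₂pos hHy) hφy]
          have h1 : β * ((H y)^2 * (φ y)^2) ≤ F₁ := by
            rw [hβdef, div_mul_eq_mul_div, div_le_iff₀ (pow_pos hKpos 2)]
            nlinarith [mul_le_mul_of_nonneg_left hq hF₁pos.le]
          exact le_trans h1 hFy
        rw [div_div, le_div_iff₀ (mul_pos (pow_pos hφy 2) (pow_pos hHy 2))]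
        calc β * ((φ y)^2 * (H y)^2) = β * ((H y)^2 * (φ y)^2) := by ring
          _ ≤ F y := hgoal
    have hzpos : 0 < (H₁⁻¹ + 1)/β := div_pos (by positivity) hβpos
    have h6 := hS6 (ξ + 1 + (H₁⁻¹ + 1)/β) (by linarith)
    have hHz : 0 < H (ξ + 1 + (H₁⁻¹ + 1)/β) :=
      lt_of_lt_of_le hH₁pos (hHlb _ (by linarith))
    have hinv : 0 < (H (ξ + 1 + (H₁⁻¹ + 1)/β))⁻¹ := inv_pos.2 hHz
    have h8 : β * ((H₁⁻¹ + 1)/β) = H₁⁻¹ + 1 := by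
      field_simp
    have hH₁inv : 0 < H₁⁻¹ := inv_pos.2 hH₁pos
    have e1 : β * (ξ + 1 + (H₁⁻¹ + 1)/β) = β * (ξ+1) + (H₁⁻¹ + 1) := by
      rw [mul_add, h8]
    rw [← hH₁def, e1] at h6
    linarith [hinv]
  -- final assembly
  intro x hx
  by_contra hvx
  push_neg at hvx
  by_cases hex : ∃ ξ : ℝ, 0 ≤ ξ ∧ 0 < v ξ ∧ 0 ≤ G ξ
  · obtain ⟨ξ, h1, h2, h3⟩ := hex
    exact hcase1 ξ h1 h2 h3
  push_neg at hex
  by_cases hv0 : 0 < v 0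
  · have hG0 : 0 ≤ G 0 := by
      have h1 : γ * v 0 ≤ a 0 * dv 0 := by linarith [hrobin]
      have h2 : a 0 * dφ 0 ≤ γ * φ 0 := by linarith [hφrob]
      have ha0 := hapos 0 le_rfl
      have hφ0 := hφpos 0 le_rfl
      have he0 := hepos 0
      have key : 0 ≤ a 0 * (φ 0 * dv 0 - dφ 0 * v 0) := by
        nlinarith [mul_le_mul_of_nonneg_left h2 hv0.le, mul_le_mul_of_nonneg_left h1 hφ0.le]
      rw [hGdef]
      simp only []
      rw [← hdvdef, ← hdφdef, mul_assoc]
      exact mul_nonneg he0.le key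
    linarith [hex 0 le_rfl hv0]
  · push_neg at hv0
    have hx0 : 0 < x := by
      rcases lt_or_eq_of_le hx with h | h
      · exact h
      · exfalso; rw [← h] at hvx; linarith
    set B2 : Set ℝ := {y | y ∈ Set.Icc 0 x ∧ v y ≤ 0} with hB2def
    have hB2ne : B2.Nonempty := ⟨0, ⟨le_rfl, hx0.le⟩, hv0⟩
    have hB2bdd : BddAbove B2 := ⟨x, fun y hy => hy.1.2⟩
    have hB2closed : IsClosed B2 := by
      have hB2eq : B2 = (Set.Ici 0 ∩ v ⁻¹' Set.Iic 0) ∩ Set.Icc 0 x := by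
        ext y; constructor
        · rintro ⟨h1, h2⟩; exact ⟨⟨h1.1, h2⟩, h1⟩
        · rintro ⟨⟨h1, h2⟩, h3⟩; exact ⟨h3, h2⟩
      rw [hB2eq]
      exact (hvcont.preimage_isClosed_of_isClosed isClosed_Ici isClosed_Iic).inter isClosed_Icc
    have hqB := hB2closed.csSup_mem hB2ne hB2bdd
    have hq0 : 0 ≤ sSup B2 := hqB.1.1
    have hqx : sSup B2 ≤ x := hqB.1.2
    have hvq : v (sSup B2) ≤ 0 := hqB.2
    have hqlt : sSup B2 < x := by
      rcases lt_or_eq_of_le hqx with h | h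
      · exact h
      · exfalso; rw [h] at hvq; linarith
    have hvmid : ∀ y : ℝ, sSup B2 < y → y ≤ x → 0 < v y := by
      intro y h1 h2
      by_contra h
      push_neg at h
      have hymem : y ∈ B2 := ⟨⟨le_trans hq0 h1.le, h2⟩, h⟩
      exact absurd (le_csSup hB2bdd hymem) (not_le.2 h1)
    have hanti := anti_trick (f := w)
      (f' := fun y => G y / (Real.exp (-η y) * a y * (φ y)^2)) hqlt
      (hwcont.mono (fun y hy => le_trans hq0 hy.1))
      (fun y hy => hwder y (lt_of_le_of_lt hq0 hy.1))
      ?_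
    · have hwq : w (sSup B2) ≤ 0 :=
        div_nonpos_iff.mpr (Or.inr ⟨hvq, (hφpos _ hq0).le⟩)
      have hwx : 0 < w x := div_pos hvx (hφpos x hx)
      linarith
    · intro y hy
      have hy0 : 0 < y := lt_of_le_of_lt hq0 hy.1
      have hvy : 0 < v y := hvmid y hy.1 hy.2.le
      have hGy : G y < 0 := hex y hy0.le hvy
      exact div_neg_of_neg_of_pos hGy (mul_pos (hApos y hy0.le) (pow_pos (hφpos y hy0.le) 2))
end

section
/- For every δ ∈ ℝ, the generalized principal eigenvalue of L u = -u'' + δ u' on ℝ equals δ²/4, i.e. sup{λ ∈ ℝ : there exists φ ∈ C²(ℝ) with φ > 0 on ℝ and -φ'' + δφ' ≥ λφ on ℝ} = δ²/4. In particular, for δ ≠ 0 one has λ₁ > 0, while the constant function 1 is a positive bounded subsolution (L1 = 0 ≤ 0), so the Maximum Principle fails even though λ₁ > 0. -/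
open Real

private lemma drift_mem (δ : ℝ) :
    (δ ^ 2 / 4) ∈ {l : ℝ | ∃ φ : ℝ → ℝ, ContDiff ℝ 2 φ ∧ (∀ x, 0 < φ x) ∧
        ∀ x, l * φ x ≤ -(deriv (deriv φ) x) + δ * deriv φ x} := by
  refine ⟨fun x => Real.exp (δ / 2 * x), ?_, fun x => Real.exp_pos _, ?_⟩
  · exact (contDiff_const.mul contDiff_id).exp
  · have hd : ∀ x : ℝ, HasDerivAt (fun x => Real.exp (δ / 2 * x))
        (δ / 2 * Real.exp (δ / 2 * x)) x := by
      intro x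
      have := ((hasDerivAt_id x).const_mul (δ / 2)).exp
      simpa [mul_comm] using this
    have h1 : deriv (fun x => Real.exp (δ / 2 * x)) = fun x => δ / 2 * Real.exp (δ / 2 * x) :=
      funext fun x => (hd x).deriv
    intro x
    rw [h1]
    have hd2 : HasDerivAt (fun x => δ / 2 * Real.exp (δ / 2 * x))
        (δ / 2 * (δ / 2 * Real.exp (δ / 2 * x))) x := (hd x).const_mul _
    rw [hd2.deriv]
    nlinarith [Real.exp_pos (δ / 2 * x)]

private lemma drift_upper (δ l : ℝ)
    (hl : ∃ φ : ℝ → ℝ, ContDiff ℝ 2 φ ∧ (∀ x, 0 < φ x) ∧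
        ∀ x, l * φ x ≤ -(deriv (deriv φ) x) + δ * deriv φ x) : l ≤ δ ^ 2 / 4 := by
  by_contra hcon
  push_neg at hcon
  obtain ⟨φ, hφ, hpos, hineq⟩ := hl
  set c : ℝ := l - δ ^ 2 / 4 with hcdef
  have hc0 : 0 < c := by rw [hcdef]; linarith
  set s : ℝ := Real.sqrt c with hsdef
  have hs0 : 0 < s := Real.sqrt_pos.mpr hc0
  have hs2 : s ^ 2 = c := Real.sq_sqrt hc0.le
  have hd1 : ∀ x, HasDerivAt φ (deriv φ x) x := fun x =>
    ((hφ.differentiable (by norm_num)) x).hasDerivAt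
  have hder : Differentiable ℝ (deriv φ) := by
    have h2 : ContDiff ℝ ((1:ℕ∞)+1) φ := by norm_num at hφ ⊢; exact hφ
    exact (contDiff_succ_iff_deriv.mp h2).2.2.differentiable (by norm_num)
  have hd2 : ∀ x, HasDerivAt (deriv φ) (deriv (deriv φ) x) x := fun x => (hder x).hasDerivAt
  set q : ℝ → ℝ := fun x => deriv φ x / φ x - δ / 2 with hqdef
  set Q : ℝ → ℝ := fun x =>
    (deriv (deriv φ) x * φ x - deriv φ x * deriv φ x) / (φ x) ^ 2 with hQdef
  have hq : ∀ x, HasDerivAt q (Q x) x := fun x =>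
    ((hd2 x).div (hd1 x) (hpos x).ne').sub_const _
  -- Riccati inequality
  have hkey : ∀ x, Q x ≤ -(q x ^ 2 + c) := by
    intro x
    have hp := hpos x
    have h := mul_le_mul_of_nonneg_right (hineq x) hp.le
    have hrw : -(q x ^ 2 + c) =
        (-((deriv φ x - δ / 2 * φ x) ^ 2 + c * (φ x) ^ 2)) / (φ x) ^ 2 := by
      simp only [hqdef]
      field_simp
    rw [hQdef, hrw]
    refine (div_le_div_iff_of_pos_right (by positivity)).mpr ?_
    nlinarith [h]
  -- f = arctan(q/s)/s decreases with slope ≤ -1 but is bounded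
  set f : ℝ → ℝ := fun x => Real.arctan (q x / s) / s with hfdef
  set g : ℝ → ℝ := fun x => f x + x with hgdef
  have hfd : ∀ x, HasDerivAt f ((1 / (1 + (q x / s) ^ 2)) * (Q x / s) / s) x := by
    intro x
    exact (((Real.hasDerivAt_arctan (q x / s)).comp x ((hq x).div_const s)).div_const s)
  have hgd : ∀ x, HasDerivAt g ((1 / (1 + (q x / s) ^ 2)) * (Q x / s) / s + 1) x := by
    intro x
    exact (hfd x).add ((hasDerivAt_id x))
  have hder_le : ∀ x, (1 / (1 + (q x / s) ^ 2)) * (Q x / s) / s + 1 ≤ 0 := by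
    intro x
    have hB : 0 < s ^ 2 + q x ^ 2 := by positivity
    have hFeq : (1 / (1 + (q x / s) ^ 2)) * (Q x / s) / s = Q x / (s ^ 2 + q x ^ 2) := by
      field_simp
    rw [hFeq]
    have hA : Q x ≤ -(s ^ 2 + q x ^ 2) := by rw [hs2]; linarith [hkey x]
    have : Q x / (s ^ 2 + q x ^ 2) ≤ -1 := by
      rw [div_le_iff₀ hB]; linarith
    linarith
  have hg : Antitone g :=
    antitone_of_deriv_nonpos (fun x => (hgd x).differentiableAt)
      (fun x => by rw [(hgd x).deriv]; exact hder_le x)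
  have hub : ∀ x, f x ≤ (π / 2) / s := fun x =>
    (div_le_div_iff_of_pos_right hs0).mpr (Real.arctan_lt_pi_div_two _).le
  have hlb : ∀ x, -(π / 2) / s ≤ f x := fun x =>
    (div_le_div_iff_of_pos_right hs0).mpr (Real.neg_pi_div_two_lt_arctan _).le
  have hT := hg (show (0:ℝ) ≤ π / s + 1 by positivity)
  have hsum : (π / 2) / s + (π / 2) / s = π / s := by field_simp; ring
  have h1 : f (π / s + 1) + (π / s + 1) ≤ f 0 + 0 := hT
  have hneg : -(π / 2) / s = -(π / 2 / s) := neg_div _ _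
  rw [hneg] at hlb
  linarith [hub 0, hlb (π / s + 1)]

/-- For every `δ ∈ ℝ`, the generalized principal eigenvalue of `L u = -u'' + δ u'` on `ℝ`
equals `δ²/4`; in particular, for `δ ≠ 0` one has `λ₁ > 0` while the constant `1` is a
positive bounded subsolution, so the Maximum Principle fails although `λ₁ > 0`. -/
theorem lambda1_of_drift_operator (δ : ℝ) :
    sSup {l : ℝ | ∃ φ : ℝ → ℝ, ContDiff ℝ 2 φ ∧ (∀ x, 0 < φ x) ∧
        ∀ x, l * φ x ≤ -(deriv (deriv φ) x) + δ * deriv φ x} = δ ^ 2 / 4 ∧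
      (δ ≠ 0 →
        0 < sSup {l : ℝ | ∃ φ : ℝ → ℝ, ContDiff ℝ 2 φ ∧ (∀ x, 0 < φ x) ∧
          ∀ x, l * φ x ≤ -(deriv (deriv φ) x) + δ * deriv φ x} ∧
        ∃ v : ℝ → ℝ, ContDiff ℝ 2 v ∧ (∀ x, 0 < v x) ∧ BddAbove (Set.range v) ∧
          (∀ x, -(deriv (deriv v) x) + δ * deriv v x ≤ 0) ∧ ¬∀ x, v x ≤ 0) := by
  have hsup : sSup {l : ℝ | ∃ φ : ℝ → ℝ, ContDiff ℝ 2 φ ∧ (∀ x, 0 < φ x) ∧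
      ∀ x, l * φ x ≤ -(deriv (deriv φ) x) + δ * deriv φ x} = δ ^ 2 / 4 :=
    IsGreatest.csSup_eq ⟨drift_mem δ, fun l hl => drift_upper δ l hl⟩
  refine ⟨hsup, fun hδ => ⟨by rw [hsup]; positivity, fun _ => (1:ℝ), contDiff_const,
    fun _ => one_pos, ⟨1, by rintro y ⟨x, rfl⟩; exact le_rfl⟩, ?_, ?_⟩⟩
  · intro x
    simp [deriv_const]
  · intro h
    have := h 0
    norm_num at this
end

section
/- Let γ > 0. Then (L, B) with L u = -u'' on (0,∞) and B u = -u'(0) + γ u(0) satisfies the Maximum Principle: every v ∈ C²([0,∞)) with sup_{[0,∞)} v < +∞, v''(x) ≥ 0 for all x > 0 (i.e. -v'' ≤ 0), and -v'(0) + γ v(0) ≤ 0 satisfies v(x) ≤ 0 for all x ≥ 0. -/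
/-- For `γ > 0`, the operator `L u = -u''` on `(0,∞)` with Robin boundary operator
`B u = -u'(0) + γ u(0)` satisfies the Maximum Principle: every `v ∈ C²([0,∞))` with
finite supremum, `-v'' ≤ 0` on `(0,∞)` and `-v'(0) + γ v(0) ≤ 0` is nonpositive. -/
theorem robin_laplacian_maximum_principle
    (γ : ℝ) (hγ : 0 < γ)
    (v : ℝ → ℝ) (hv : ContDiffOn ℝ 2 v (Set.Ici 0))
    (hbdd : BddAbove (v '' Set.Ici 0))
    (hsub : ∀ x : ℝ, 0 < x → 0 ≤ deriv (deriv v) x)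
    (hrobin : -(derivWithin v (Set.Ici 0) 0) + γ * v 0 ≤ 0) :
    ∀ x : ℝ, 0 ≤ x → v x ≤ 0 := by
  set f : ℝ → ℝ := derivWithin v (Set.Ici 0) with hfdef
  have hIoi : ∀ x : ℝ, 0 < x → f x = deriv v x := by
    intro x hx
    exact derivWithin_of_mem_nhds (Ici_mem_nhds hx)
  have heq : ∀ x : ℝ, 0 < x → f =ᶠ[nhds x] deriv v := by
    intro x hx
    filter_upwards [Ioi_mem_nhds hx] with y hy
    exact hIoi y hy
  -- v differentiable on Ioi 0 (as DifferentiableAt)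
  have hvdiff : ∀ x : ℝ, 0 < x → DifferentiableAt ℝ v x := by
    intro x hx
    exact ((hv.differentiableOn (by norm_num) x (le_of_lt hx)).differentiableAt
      (Ici_mem_nhds hx))
  -- deriv v is differentiable on Ioi 0
  have hdv : ∀ x : ℝ, 0 < x → DifferentiableAt ℝ (deriv v) x := by
    intro x hx
    have h2 : ContDiffOn ℝ 2 v (Set.Ioi 0) := hv.mono Set.Ioi_subset_Ici_self
    have h3 : ContDiffOn ℝ 1 (deriv v) (Set.Ioi 0) :=
      h2.deriv_of_isOpen isOpen_Ioi (by norm_num)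
    exact ((h3.differentiableOn one_ne_zero) x hx).differentiableAt (Ioi_mem_nhds hx)
  have hfcont : ContinuousOn f (Set.Ici 0) :=
    hv.continuousOn_derivWithin (uniqueDiffOn_Ici 0) (by norm_num)
  have hfmono : MonotoneOn f (Set.Ici 0) := by
    apply monotoneOn_of_deriv_nonneg (convex_Ici 0) hfcont
    · rw [interior_Ici]
      intro x hx
      exact (((hdv x hx).congr_of_eventuallyEq (heq x hx)).differentiableWithinAt)
    · rw [interior_Ici]
      intro x hx
      rw [(heq x hx).deriv_eq]
      exact hsub x hx
  obtain ⟨M, hM⟩ := hbdd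
  have hMv : ∀ x : ℝ, 0 ≤ x → v x ≤ M := fun x hx => hM ⟨x, hx, rfl⟩
  -- f ≤ 0 on Ici 0
  have key : ∀ a : ℝ, 0 ≤ a → f a ≤ 0 := by
    intro a ha
    by_contra h
    push_neg at h
    -- g x = v x - f a * x is monotone on Ici a
    have hgmono : MonotoneOn (fun x => v x - f a * x) (Set.Ici a) := by
      apply monotoneOn_of_deriv_nonneg (convex_Ici a)
      · exact ((hv.continuousOn.mono (Set.Ici_subset_Ici.mpr ha)).sub
          (continuousOn_const.mul continuousOn_id))
      · rw [interior_Ici]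
        intro x hx
        have hx0 : (0:ℝ) < x := lt_of_le_of_lt ha hx
        exact ((hvdiff x hx0).sub ((differentiableAt_const _).mul differentiableAt_id)).differentiableWithinAt
      · rw [interior_Ici]
        intro x hx
        have hx0 : (0:ℝ) < x := lt_of_le_of_lt ha hx
        have hder : HasDerivAt (fun y => v y - f a * y) (deriv v x - f a) x :=
          (hvdiff x hx0).hasDerivAt.sub (by simpa using (hasDerivAt_id x).const_mul (f a))
        rw [hder.deriv, ← hIoi x hx0]
        have : f a ≤ f x := hfmono ha (le_trans ha (le_of_lt hx)) (le_of_lt hx)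
        linarith
    -- choose x large
    set x := a + (M - v a) / f a + 1 with hxdef
    have hMa : v a ≤ M := hMv a ha
    have hax : a ≤ x := by
      have h0 : 0 ≤ (M - v a) / f a := div_nonneg (by linarith) (le_of_lt h)
      rw [hxdef]; linarith
    have hgrow : v a - f a * a ≤ v x - f a * x :=
      hgmono (Set.self_mem_Ici) hax hax
    have hxM : v x ≤ M := hMv x (le_trans ha hax)
    have hfx : f a * (x - a) = (M - v a) + f a := by
      have : x - a = (M - v a) / f a + 1 := by rw [hxdef]; ring
      rw [this]
      field_simp
    nlinarith [hgrow, hxM, hfx]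
  have hf0 : f 0 ≤ 0 := key 0 le_rfl
  have hv0 : v 0 ≤ 0 := by
    have : γ * v 0 ≤ f 0 := by rw [hfdef]; linarith [hrobin]
    nlinarith
  have hanti : AntitoneOn v (Set.Ici 0) := by
    apply antitoneOn_of_deriv_nonpos (convex_Ici 0) hv.continuousOn
    · rw [interior_Ici]
      intro x hx
      exact (hvdiff x hx).differentiableWithinAt
    · rw [interior_Ici]
      intro x hx
      rw [← hIoi x hx]
      exact key x (le_of_lt hx)
  intro x hx
  exact le_trans (hanti Set.self_mem_Ici hx hx) hv0
end

section
/- There exist functions u₊, u₋ ∈ C²(ℝ), both everywhere positive, both solving -u'' - c(x) u = 0 on ℝ, and linearly independent; specifically u₊ satisfies u₊(1) = 1, u₊'(1) = 0, is nonincreasing, nonconstant, and identically equal to 1 on [1,∞), while u₋ satisfies u₋(-1) = 1, u₋'(-1) = 0, is nondecreasing, nonconstant, and identically equal to 1 on (-∞,-1]. In particular the eigenvalue 0 of L u = -u'' - c u on ℝ admits two linearly independent positive eigenfunctions, so it is not simple. -/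
open intervalIntegral MeasureTheory Set Function

lemma key_deriv (w : ℝ → ℝ) (hw : Continuous w) (x : ℝ) :
    HasDerivAt (fun y => ∫ t in y..1, (t - y) * w t) (-(∫ t in x..1, w t)) x := by
  have hc1 : Continuous fun t : ℝ => t * w t := continuous_id.mul hw
  have heq : (fun y => ∫ t in y..1, (t - y) * w t)
      = fun y => (∫ t in y..1, t * w t) - y * ∫ t in y..1, w t := by
    funext y
    rw [← intervalIntegral.integral_const_mul, ← intervalIntegral.integral_sub (g := fun t => y * w t)
      (hc1.intervalIntegrable _ _) ((continuous_const.mul hw).intervalIntegrable _ _)]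
    congr 1; funext t; ring
  rw [heq]
  have h1 : HasDerivAt (fun y => ∫ t in y..1, t * w t) (-(x * w x)) x :=
    intervalIntegral.integral_hasDerivAt_left (hc1.intervalIntegrable _ _)
      (hc1.stronglyMeasurableAtFilter _ _) hc1.continuousAt
  have h2 : HasDerivAt (fun y => ∫ t in y..1, w t) (-(w x)) x :=
    intervalIntegral.integral_hasDerivAt_left (hw.intervalIntegrable _ _)
      (hw.stronglyMeasurableAtFilter _ _) hw.continuousAt
  have h3 := (hasDerivAt_id x).mul h2
  have := h1.sub h3
  refine this.congr_deriv ?_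
  simp only [id_eq, one_mul]
  ring

lemma integral_eq_zero_right (g : ℝ → ℝ) (hg : ∀ t : ℝ, (1:ℝ) ≤ t → g t = 0)
    {y : ℝ} (hy : 1 ≤ y) : ∫ t in y..1, g t = 0 := by
  have h : EqOn g (fun _ => (0:ℝ)) (uIcc y 1) := by
    intro t ht
    exact hg t (by simpa [min_eq_right hy] using ht.1)
  rw [intervalIntegral.integral_congr h]
  simp

lemma int_one_sub_pow (k : ℕ) (y : ℝ) :
    ∫ t in y..1, (1 - t) ^ k = (1 - y) ^ (k + 1) / (k + 1) := by
  have hD : ∀ t : ℝ, HasDerivAt (fun s : ℝ => -((1 - s) ^ (k + 1) / (k + 1)))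
      ((1 - t) ^ k) t := by
    intro t
    have h1 : HasDerivAt (fun s : ℝ => (1 - s)) (-1) t := by
      simpa using (hasDerivAt_id t).const_sub 1
    have h2 := (h1.pow (k + 1)).div_const ((k : ℝ) + 1)
    have h3 := h2.neg
    refine h3.congr_deriv ?_
    have hk : ((k : ℝ) + 1) ≠ 0 := by positivity
    push_cast
    field_simp
  have := intervalIntegral.integral_eq_sub_of_hasDerivAt
    (f := fun s : ℝ => -((1 - s) ^ (k + 1) / (k + 1)))
    (fun t _ => hD t) (((continuous_const.sub continuous_id).pow k).intervalIntegrable y 1)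
  rw [this]
  simp

lemma exists_sol (a : ℝ → ℝ) (ha : Continuous a) (ha0 : ∀ t, 0 ≤ a t)
    (haz : ∀ t : ℝ, 1 ≤ |t| → a t = 0) :
    ∃ u : ℝ → ℝ, Continuous u ∧ ∀ x, u x = 1 + ∫ t in x..1, (t - x) * (a t * u t) := by
  -- global bound on a
  obtain ⟨C, hC⟩ := (isCompact_Icc (a := (-1:ℝ)) (b := 1)).exists_bound_of_continuousOn
    ha.continuousOn
  set M : ℝ := max C 0 with hM_def
  have hM0 : 0 ≤ M := le_max_right _ _
  have hMa : ∀ t, a t ≤ M := by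
    intro t
    rcases le_or_gt (|t|) 1 with h | h
    · have := hC t (abs_le.mp h |> fun h' => ⟨h'.1, h'.2⟩)
      calc a t ≤ |a t| := le_abs_self _
        _ = ‖a t‖ := rfl
        _ ≤ C := this
        _ ≤ M := le_max_left _ _
    · rw [haz t h.le]; exact hM0
  -- the operator on plain functions
  set Tf : (ℝ → ℝ) → (ℝ → ℝ) :=
    fun f x => 1 + ∫ t in (max x (-1))..1, (t - max x (-1)) * (a t * f t) with hTf_def
  have hTf_cont : ∀ f : ℝ → ℝ, Continuous f → Continuous (Tf f) := by
    intro f hf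
    have hw : Continuous fun t => a t * f t := ha.mul hf
    have hdiff : Differentiable ℝ (fun y => ∫ t in y..1, (t - y) * (a t * f t)) :=
      fun y => (key_deriv _ hw y).differentiableAt
    exact continuous_const.add (hdiff.continuous.comp (continuous_id.max continuous_const))
  -- bound
  have hTf_bdd : ∀ f : BoundedContinuousFunction ℝ ℝ, ∀ x, ‖Tf (⇑f) x‖ ≤ 1 + 4 * (M * ‖f‖) := by
    intro f x
    set y : ℝ := max x (-1) with hy_def
    have hy1 : (-1:ℝ) ≤ y := le_max_right _ _
    have hMf : 0 ≤ M * ‖f‖ := mul_nonneg hM0 (norm_nonneg f)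
    have hbound : ‖∫ t in y..1, (t - y) * (a t * f t)‖ ≤ 4 * (M * ‖f‖) := by
      rcases le_or_gt y 1 with hy | hy
      · have h1 : ∀ t ∈ Set.uIoc y 1, ‖(t - y) * (a t * f t)‖ ≤ 2 * (M * ‖f‖) := by
          intro t ht
          rw [Set.uIoc_of_le hy] at ht
          have h2 : |t - y| ≤ 2 := by
            rw [abs_of_nonneg (by linarith [ht.1.le])]
            linarith [ht.2]
          have h3 : ‖a t * f t‖ ≤ M * ‖f‖ := by
            rw [norm_mul]
            exact mul_le_mul (by rw [Real.norm_eq_abs, abs_of_nonneg (ha0 t)]; exact hMa t)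
              (f.norm_coe_le_norm t) (norm_nonneg _) hM0
          calc ‖(t - y) * (a t * f t)‖ = |t - y| * ‖a t * f t‖ := by rw [norm_mul]; rfl
            _ ≤ 2 * (M * ‖f‖) := mul_le_mul h2 h3 (norm_nonneg _) (by norm_num)
        calc ‖∫ t in y..1, (t - y) * (a t * f t)‖ ≤ 2 * (M * ‖f‖) * |1 - y| :=
              intervalIntegral.norm_integral_le_of_norm_le_const h1
          _ ≤ 2 * (M * ‖f‖) * 2 := by
              have : |1 - y| ≤ 2 := by rw [abs_of_nonneg (by linarith)]; linarith
              exact mul_le_mul_of_nonneg_left this (by positivity)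
          _ = 4 * (M * ‖f‖) := by ring
      · rw [integral_eq_zero_right _ (fun t ht => by
          rw [haz t (le_trans ht (le_abs_self t))]; ring) hy.le]
        simpa using by positivity
    calc ‖Tf (⇑f) x‖ ≤ ‖(1:ℝ)‖ + ‖∫ t in y..1, (t - y) * (a t * f t)‖ := norm_add_le _ _
      _ ≤ 1 + 4 * (M * ‖f‖) := by rw [norm_one]; linarith
  -- the operator on bounded continuous functions
  set T : (BoundedContinuousFunction ℝ ℝ) → (BoundedContinuousFunction ℝ ℝ) := fun f =>
    BoundedContinuousFunction.ofNormedAddCommGroup (Tf ⇑f) (hTf_cont _ f.continuous)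
      (1 + 4 * (M * ‖f‖)) (hTf_bdd f) with hT_def
  have hTcoe : ∀ (f : BoundedContinuousFunction ℝ ℝ) (x : ℝ), T f x = Tf (⇑f) x := fun f x => rfl
  -- iterate bound
  have hiter : ∀ (n : ℕ) (f g : BoundedContinuousFunction ℝ ℝ) (x : ℝ),
      |T^[n] f x - T^[n] g x| ≤
        dist f g * (M * (1 - min (max x (-1)) 1) ^ 2) ^ n / n.factorial := by
    intro n
    induction n with
    | zero =>
      intro f g x
      simpa [Real.dist_eq] using BoundedContinuousFunction.dist_coe_le_dist (f := f) (g := g) x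
    | succ n IH =>
      intro f g x
      rw [Function.iterate_succ_apply', Function.iterate_succ_apply']
      set F := T^[n] f with hF_def
      set G := T^[n] g with hG_def
      set y : ℝ := max x (-1) with hy_def
      have hy1 : (-1:ℝ) ≤ y := le_max_right _ _
      have hD : 0 ≤ dist f g := dist_nonneg
      have hcontFG : Continuous fun t => (t - y) * (a t * (F t - G t)) :=
        (continuous_id.sub continuous_const).mul (ha.mul (F.continuous.sub G.continuous))
      have hsub : T F x - T G x = ∫ t in y..1, (t - y) * (a t * (F t - G t)) := by
        rw [hTcoe, hTcoe]
        simp only [hTf_def, ← hy_def]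
        have harith : ∀ A B : ℝ,
            1 + A - (1 + B) = A - B := by intros; ring
        rw [harith, ← intervalIntegral.integral_sub
          ((by fun_prop : Continuous fun t : ℝ => (t - y) * (a t * F t)).intervalIntegrable _ _)
          ((by fun_prop : Continuous fun t : ℝ => (t - y) * (a t * G t)).intervalIntegrable _ _)]
        apply intervalIntegral.integral_congr
        intro t _
        ring
      rw [hsub]
      rcases le_or_gt y 1 with hy | hy
      · have hmin : min y 1 = y := min_eq_left hy
        rw [hmin]
        have hfac : ((n+1).factorial : ℝ) = (n.factorial : ℝ) * (n+1) := by
          rw [Nat.factorial_succ]; push_cast; ring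
        have hfacpos : (0:ℝ) < (n.factorial : ℝ) := by positivity
        calc |∫ t in y..1, (t - y) * (a t * (F t - G t))|
            ≤ ∫ t in y..1, |(t - y) * (a t * (F t - G t))| :=
              intervalIntegral.abs_integral_le_integral_abs hy
          _ ≤ ∫ t in y..1,
                (1 - y) * (M * (dist f g * (M * (1 - t) ^ 2) ^ n / n.factorial)) := by
              apply intervalIntegral.integral_mono_on hy
                (hcontFG.abs.intervalIntegrable _ _)
                ((by fun_prop : Continuous fun t : ℝ =>
                  (1 - y) * (M * (dist f g * (M * (1 - t) ^ 2) ^ n / n.factorial))).intervalIntegrable _ _)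
              intro t ht
              have hty : y ≤ t := ht.1
              have ht1 : t ≤ 1 := ht.2
              have htm : min (max t (-1)) 1 = t := by
                rw [max_eq_left (le_trans hy1 hty), min_eq_left ht1]
              have hIH := IH f g t
              rw [htm] at hIH
              have e1 : |t - y| ≤ 1 - y := by
                rw [abs_of_nonneg (by linarith)]; linarith
              have e2 : |a t| ≤ M := by
                rw [abs_of_nonneg (ha0 t)]; exact hMa t
              rw [abs_mul, abs_mul]
              apply mul_le_mul e1 (mul_le_mul e2 hIH (abs_nonneg _) hM0)
                (by positivity) (by linarith)
          _ = ((1 - y) * M * dist f g * M ^ n / n.factorial) *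
                ∫ t in y..1, (1 - t) ^ (2 * n) := by
              rw [← intervalIntegral.integral_const_mul]
              apply intervalIntegral.integral_congr
              intro t _
              simp only [mul_pow, ← pow_mul]
              ring
          _ = ((1 - y) * M * dist f g * M ^ n / n.factorial) *
                ((1 - y) ^ (2 * n + 1) / (2 * (n:ℝ) + 1)) := by
              rw [int_one_sub_pow]
              push_cast
              ring_nf
          _ ≤ dist f g * (M * (1 - y) ^ 2) ^ (n + 1) / (n + 1).factorial := by
              have h1y : (0:ℝ) ≤ 1 - y := by linarith
              have e3 : ((1 - y) * M * dist f g * M ^ n / n.factorial) *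
                  ((1 - y) ^ (2 * n + 1) / (2 * (n:ℝ) + 1))
                  = dist f g * M ^ (n+1) * (1 - y) ^ (2 * n + 2) /
                    ((n.factorial : ℝ) * (2 * (n:ℝ) + 1)) := by
                field_simp
                ring
              have e4 : dist f g * (M * (1 - y) ^ 2) ^ (n + 1) / ((n + 1).factorial : ℝ)
                  = dist f g * M ^ (n+1) * (1 - y) ^ (2 * n + 2) /
                    ((n.factorial : ℝ) * ((n:ℝ) + 1)) := by
                rw [hfac, mul_pow, ← pow_mul]
                ring_nf
              rw [e3, e4]
              apply div_le_div_of_nonneg_left (by positivity)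
                (by positivity)
                (by nlinarith [hfacpos])
      · rw [integral_eq_zero_right _ (fun t ht => by
          rw [haz t (le_trans ht (le_abs_self t))]; ring) hy.le]
        simpa using by positivity
  -- distance bound on iterates
  have hdist : ∀ (n : ℕ) (f g : BoundedContinuousFunction ℝ ℝ),
      dist (T^[n] f) (T^[n] g) ≤ ((4*M)^n / n.factorial) * dist f g := by
    intro n f g
    have hD : 0 ≤ dist f g := dist_nonneg
    rw [BoundedContinuousFunction.dist_le (by positivity)]
    intro x
    rw [Real.dist_eq]
    have hz1 : (-1:ℝ) ≤ min (max x (-1)) 1 := le_min (le_max_right _ _) (by norm_num)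
    have hz2 : min (max x (-1)) 1 ≤ 1 := min_le_right _ _
    calc |T^[n] f x - T^[n] g x|
        ≤ dist f g * (M * (1 - min (max x (-1)) 1) ^ 2) ^ n / n.factorial := hiter n f g x
      _ ≤ dist f g * (4*M) ^ n / n.factorial := by
          have hbase : M * (1 - min (max x (-1)) 1) ^ 2 ≤ 4 * M := by
            have h4 : (1 - min (max x (-1)) 1) ^ 2 ≤ 4 := by
              nlinarith [mul_nonneg (by linarith : (0:ℝ) ≤ 3 - min (max x (-1)) 1)
                (by linarith : (0:ℝ) ≤ 1 + min (max x (-1)) 1)]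
            nlinarith [mul_le_mul_of_nonneg_left h4 hM0]
          have hpow : (M * (1 - min (max x (-1)) 1) ^ 2) ^ n ≤ (4*M) ^ n :=
            pow_le_pow_left₀ (mul_nonneg hM0 (sq_nonneg _)) hbase n
          exact (div_le_div_iff_of_pos_right (by positivity)).mpr
            (mul_le_mul_of_nonneg_left hpow hD)
      _ = ((4*M)^n / n.factorial) * dist f g := by ring
  -- choose n making the iterate a contraction
  obtain ⟨n, hn⟩ : ∃ n : ℕ, (4*M)^n / n.factorial < 1 := by
    have := FloorSemiring.tendsto_pow_div_factorial_atTop (4*M)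
    have h2 := this.eventually (gt_mem_nhds one_pos)
    exact h2.exists
  have hnn : 0 ≤ (4*M)^n / n.factorial := by positivity
  set K : NNReal := ((4*M)^n / n.factorial).toNNReal with hK_def
  have hcontr : ContractingWith K (T^[n]) := by
    constructor
    · rwa [← NNReal.coe_lt_one, Real.coe_toNNReal _ hnn]
    · apply LipschitzWith.of_dist_le_mul
      intro f g
      rw [Real.coe_toNNReal _ hnn]
      exact hdist n f g
  -- fixed point
  set u₀ : BoundedContinuousFunction ℝ ℝ := hcontr.fixedPoint (T^[n]) with hu₀_def
  have hfix : T u₀ = u₀ := hcontr.isFixedPt_fixedPoint_iterate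
  have hfix' : ∀ x : ℝ, u₀ x =
      1 + ∫ t in (max x (-1))..1, (t - max x (-1)) * (a t * u₀ t) := by
    intro x
    conv_lhs => rw [← hfix]
    rw [hTcoe]
  -- the actual solution
  set u : ℝ → ℝ := fun z => 1 + ∫ t in z..1, (t - z) * (a t * u₀ t) with hu_def
  have hA : ∀ t : ℝ, a t * u₀ t = a t * u t := by
    intro t
    rcases le_or_gt 1 (|t|) with h | h
    · rw [haz t h]; ring
    · have ht : -1 < t ∧ t < 1 := abs_lt.mp h
      have hmax : max t (-1) = t := max_eq_left ht.1.le
      have : u₀ t = u t := by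
        rw [hfix' t, hmax]
      rw [this]
  refine ⟨u, ?_, ?_⟩
  · have hw : Continuous fun t => a t * u₀ t := ha.mul u₀.continuous
    have hdiff : Differentiable ℝ (fun y => ∫ t in y..1, (t - y) * (a t * u₀ t)) :=
      fun y => (key_deriv _ hw y).differentiableAt
    exact continuous_const.add hdiff.continuous
  · intro x
    have hcongr : (∫ t in x..1, (t - x) * (a t * u t))
        = ∫ t in x..1, (t - x) * (a t * u₀ t) :=
      intervalIntegral.integral_congr (fun t _ => by rw [← hA t])
    rw [hcongr]

lemma solution_props (a u : ℝ → ℝ) (ha : Continuous a) (ha0 : ∀ t, 0 ≤ a t)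
    (haz : ∀ t : ℝ, 1 ≤ |t| → a t = 0) (hapos : ∀ t ∈ Set.Ioo (-1:ℝ) 1, 0 < a t)
    (hu : Continuous u)
    (heq : ∀ x, u x = 1 + ∫ t in x..1, (t - x) * (a t * u t)) :
    ContDiff ℝ 2 u ∧ (∀ x, 0 < u x) ∧ (∀ x, deriv (deriv u) x = a x * u x) ∧
    u 1 = 1 ∧ deriv u 1 = 0 ∧ Antitone u ∧ 1 < u (-1) ∧ (∀ x : ℝ, 1 ≤ x → u x = 1) := by
  set w : ℝ → ℝ := fun t => a t * u t with hw_def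
  have hw : Continuous w := ha.mul hu
  have hufun : u = fun x => 1 + ∫ t in x..1, (t - x) * w t := funext heq
  -- first derivative
  have hud : ∀ x, HasDerivAt u (-(∫ t in x..1, w t)) x := by
    intro x
    rw [hufun]
    exact (key_deriv w hw x).const_add 1
  set v : ℝ → ℝ := fun x => -(∫ t in x..1, w t) with hv_def
  have hvd : ∀ x, HasDerivAt v (w x) x := by
    intro x
    have h2 : HasDerivAt (fun y => ∫ t in y..1, w t) (-(w x)) x :=
      intervalIntegral.integral_hasDerivAt_left (hw.intervalIntegrable _ _)
        (hw.stronglyMeasurableAtFilter _ _) hw.continuousAt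
    have h3 := h2.neg
    rw [neg_neg] at h3
    exact h3
  have hderivu : deriv u = v := funext fun x => (hud x).deriv
  have hderivv : deriv v = w := funext fun x => (hvd x).deriv
  have hdiffu : Differentiable ℝ u := fun x => (hud x).differentiableAt
  have hdiffv : Differentiable ℝ v := fun x => (hvd x).differentiableAt
  -- C²
  have hC2 : ContDiff ℝ 2 u := by
    have h2 : (2 : WithTop ℕ∞) = 1 + 1 := by norm_num
    rw [h2, contDiff_succ_iff_deriv]
    refine ⟨hdiffu, by simp, ?_⟩
    rw [hderivu, contDiff_one_iff_deriv]
    exact ⟨hdiffv, hderivv ▸ hw⟩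
  -- u = 1 for x ≥ 1
  have hone : ∀ x : ℝ, 1 ≤ x → u x = 1 := by
    intro x hx
    rw [heq x]
    have : EqOn (fun t => (t - x) * w t) (fun _ => (0:ℝ)) (uIcc x 1) := by
      intro t ht
      have h1t : (1:ℝ) ≤ t := by
        rcases ht with ⟨h1, h2⟩
        simpa [min_eq_right hx] using h1
      simp [hw_def, haz t (le_trans h1t (le_abs_self t))]
    rw [intervalIntegral.integral_congr this]
    simp
  -- positivity
  have hpos : ∀ x, 0 < u x := by
    by_contra hcon
    push_neg at hcon
    obtain ⟨x₀, hx₀⟩ := hcon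
    set Z : Set ℝ := {x | u x ≤ 0} with hZ
    have hZne : Z.Nonempty := ⟨x₀, hx₀⟩
    have hZclosed : IsClosed Z := isClosed_le hu continuous_const
    have hZbdd : BddAbove Z := by
      refine ⟨1, fun z hz => ?_⟩
      by_contra hzz
      push_neg at hzz
      have := hone z hzz.le
      simp only [hZ, Set.mem_setOf_eq, this] at hz
      linarith
    set s := sSup Z with hs
    have hsZ : s ∈ Z := hZclosed.csSup_mem hZne hZbdd
    have hs1 : s < 1 := by
      rcases lt_or_eq_of_le (le_csSup hZbdd hsZ |>.trans_eq rfl : s ≤ s) with h | h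
      · exact absurd rfl h.ne
      · by_contra hge
        push_neg at hge
        have := hone s hge
        simp only [hZ, Set.mem_setOf_eq, this] at hsZ
        linarith
    have hpos' : ∀ t, s < t → 0 < u t := by
      intro t ht
      by_contra hle
      push_neg at hle
      exact absurd (le_csSup hZbdd (show t ∈ Z from hle)) (not_le.mpr ht)
    have hint : 0 ≤ ∫ t in s..1, (t - s) * w t := by
      apply intervalIntegral.integral_nonneg hs1.le
      intro t ht
      rcases eq_or_lt_of_le ht.1 with h | h
      · simp [← h]
      · have := hpos' t h
        have := ha0 t
        have hwnn : 0 ≤ w t := mul_nonneg (ha0 t) (hpos' t h).le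
        nlinarith [sub_nonneg.mpr ht.1]
    have : (1:ℝ) ≤ u s := by rw [heq s]; linarith
    have : u s ≤ 0 := hsZ
    linarith
  -- antitone
  have hvle : ∀ x, v x ≤ 0 := by
    intro x
    rcases le_or_gt x 1 with hx | hx
    · have : 0 ≤ ∫ t in x..1, w t := by
        apply intervalIntegral.integral_nonneg hx
        intro t _
        exact mul_nonneg (ha0 t) (hpos t).le
      simp only [hv_def]; linarith
    · have hz : EqOn w (fun _ => (0:ℝ)) (uIcc x 1) := by
        intro t ht
        have h1t : (1:ℝ) ≤ t := by
          rcases ht with ⟨h1, h2⟩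
          simpa [min_eq_right hx.le] using h1
        simp [hw_def, haz t (le_trans h1t (le_abs_self t))]
      simp only [hv_def]
      rw [intervalIntegral.integral_congr hz]
      simp
  have hanti : Antitone u := by
    apply antitone_of_deriv_nonpos hdiffu
    intro x
    rw [hderivu]
    exact hvle x
  -- u(-1) > 1
  have hm1 : 1 < u (-1) := by
    rw [heq (-1)]
    have : 0 < ∫ t in (-1:ℝ)..1, (t - (-1)) * w t := by
      apply intervalIntegral.intervalIntegral_pos_of_pos_on
      · exact ((continuous_id.sub continuous_const).mul hw).intervalIntegrable _ _
      · intro t ht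
        have h1 : 0 < t - (-1) := by linarith [ht.1]
        have h2 : 0 < w t := mul_pos (hapos t ht) (hpos t)
        positivity
      · norm_num
    linarith
  refine ⟨hC2, hpos, ?_, ?_, ?_, hanti, hm1, hone⟩
  · intro x
    rw [hderivu, hderivv]
  · rw [heq 1]; simp
  · rw [hderivu]; simp [hv_def]

lemma master (c : ℝ → ℝ) (hc : Continuous c)
    (hcneg : ∀ x ∈ Set.Ioo (-1 : ℝ) 1, c x < 0)
    (hczero : ∀ x : ℝ, 1 ≤ |x| → c x = 0) :
    ∃ u : ℝ → ℝ, ContDiff ℝ 2 u ∧ (∀ x, 0 < u x) ∧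
      (∀ x, deriv (deriv u) x = -c x * u x) ∧
      u 1 = 1 ∧ deriv u 1 = 0 ∧ Antitone u ∧ 1 < u (-1) ∧ (∀ x : ℝ, 1 ≤ x → u x = 1) := by
  set a : ℝ → ℝ := fun t => -c t with ha_def
  have ha : Continuous a := hc.neg
  have haz : ∀ t : ℝ, 1 ≤ |t| → a t = 0 := fun t ht => by simp [ha_def, hczero t ht]
  have hapos : ∀ t ∈ Set.Ioo (-1:ℝ) 1, 0 < a t := fun t ht => by
    simp only [ha_def]; linarith [hcneg t ht]
  have ha0 : ∀ t, 0 ≤ a t := by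
    intro t
    rcases le_or_gt 1 (|t|) with h | h
    · rw [haz t h]
    · exact (hapos t (abs_lt.mp h |> fun h' => ⟨h'.1, h'.2⟩)).le
  obtain ⟨u, hu, heq⟩ := exists_sol a ha ha0 haz
  obtain ⟨h1, h2, h3, h4, h5, h6, h7, h8⟩ := solution_props a u ha ha0 haz hapos hu heq
  exact ⟨u, h1, h2, fun x => h3 x, h4, h5, h6, h7, h8⟩

/-- Let `c : ℝ → ℝ` be continuous with `c < 0` on `(-1,1)` and `c = 0` outside `(-1,1)`.
Then the operator `L u = -u'' - c u` on `ℝ` admits two linearly independent positive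
eigenfunctions `u₊, u₋` for the eigenvalue `0`: `u₊(1) = 1`, `u₊'(1) = 0`, `u₊` is
nonincreasing, nonconstant and `≡ 1` on `[1,∞)`, while `u₋(-1) = 1`, `u₋'(-1) = 0`,
`u₋` is nondecreasing, nonconstant and `≡ 1` on `(-∞,-1]`. In particular the eigenvalue
`0` is not simple. -/
theorem not_simple_eigenvalue
    (c : ℝ → ℝ) (hc : Continuous c)
    (hcneg : ∀ x ∈ Set.Ioo (-1 : ℝ) 1, c x < 0)
    (hczero : ∀ x : ℝ, 1 ≤ |x| → c x = 0) :
    ∃ uP uM : ℝ → ℝ,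
      ContDiff ℝ 2 uP ∧ ContDiff ℝ 2 uM ∧
      (∀ x, 0 < uP x) ∧ (∀ x, 0 < uM x) ∧
      (∀ x, -(deriv (deriv uP) x) - c x * uP x = 0) ∧
      (∀ x, -(deriv (deriv uM) x) - c x * uM x = 0) ∧
      uP 1 = 1 ∧ deriv uP 1 = 0 ∧ Antitone uP ∧ (∃ x y, uP x ≠ uP y) ∧
        (∀ x : ℝ, 1 ≤ x → uP x = 1) ∧
      uM (-1) = 1 ∧ deriv uM (-1) = 0 ∧ Monotone uM ∧ (∃ x y, uM x ≠ uM y) ∧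
        (∀ x : ℝ, x ≤ -1 → uM x = 1) ∧
      ¬∃ t : ℝ, ∀ x, uP x = t * uM x := by
  obtain ⟨uP, hP1, hP2, hP3, hP4, hP5, hP6, hP7, hP8⟩ := master c hc hcneg hczero
  set c' : ℝ → ℝ := fun x => c (-x) with hc'_def
  have hc' : Continuous c' := hc.comp continuous_neg
  have hc'neg : ∀ x ∈ Set.Ioo (-1 : ℝ) 1, c' x < 0 := by
    intro x hx
    exact hcneg (-x) ⟨by linarith [hx.2], by linarith [hx.1]⟩
  have hc'zero : ∀ x : ℝ, 1 ≤ |x| → c' x = 0 := fun x hx =>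
    hczero (-x) (by rwa [abs_neg])
  obtain ⟨v, hM1, hM2, hM3, hM4, hM5, hM6, hM7, hM8⟩ := master c' hc' hc'neg hc'zero
  set uM : ℝ → ℝ := fun x => v (-x) with huM_def
  have hdM : ∀ x, deriv uM x = -deriv v (-x) := fun x => deriv_comp_neg v x
  have hdM2 : ∀ x, deriv (deriv uM) x = deriv (deriv v) (-x) := by
    intro x
    have h1 : deriv uM = fun x => -deriv v (-x) := funext hdM
    rw [h1]
    rw [deriv.fun_neg]
    rw [deriv_comp_neg]
    ring
  refine ⟨uP, uM, hP1, hM1.comp (contDiff_id.neg), hP2, fun x => hM2 (-x), ?_, ?_,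
    hP4, hP5, hP6, ⟨-1, 1, by rw [hP4]; exact ne_of_gt hP7⟩, hP8, ?_, ?_, ?_,
    ⟨1, -1, ?_⟩, ?_, ?_⟩
  · intro x; rw [hP3 x]; ring
  · intro x
    rw [hdM2 x, hM3 (-x)]
    show -(-c' (-x) * v (-x)) - c x * v (-x) = 0
    have : c' (-x) = c x := by simp [hc'_def]
    rw [this]; ring
  · show v (-(-1)) = 1; rw [neg_neg, hM4]
  · rw [hdM (-1), neg_neg, hM5]; ring
  · intro x y hxy
    exact hM6 (neg_le_neg hxy)
  · show v (-1) ≠ v (-(-1))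
    rw [neg_neg, hM4]
    exact ne_of_gt hM7
  · intro x hx
    show v (-x) = 1
    exact hM8 (-x) (by linarith)
  · rintro ⟨t, ht⟩
    have h1 : uP (-1) = t := by rw [ht (-1)]; show t * v (-(-1)) = t; rw [neg_neg, hM4]; ring
    have h2 : 1 < t := h1 ▸ hP7
    have h3 : uP 1 = t * v (-1) := ht 1
    rw [hP4] at h3
    have h4 : 1 < v (-1) := hM7
    nlinarith
end
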